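/- The worst-case value function V*_worst, defined as the fixed point of (T_worst V)(s) = min over (a,s') with π(a|s) > 0 and p(s'|s,a) > 0 of [r(s,a,s') + γ V(s')], is a fixed point of the operator T− given by (T− V)(s) = V(s) + E_{a,s'}[min(δ,0)]: that is, T− V*_worst = V*_worst. -/
import Mathlib


open Finset

/-- The worst-case value function `V*_worst`, the fixed point of the
worst-case Bellman operator (minimum over supported `(a,s')` pairs of
`r(s,a,s') + γ V(s')`), is a fixed point of `T₋`. -/
theorem worst_fixed_point_of_Tminus {S A : Type*}
    [Fintype S] [Nonempty S] [Fintype A] [Nonempty A]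
    (pol : S → A → ℝ) (P : S → A → S → ℝ) (R : S → A → S → ℝ) (γ : ℝ)
    (hpol0 : ∀ s a, 0 ≤ pol s a) (hpol1 : ∀ s, ∑ a, pol s a = 1)
    (hP0 : ∀ s a s', 0 ≤ P s a s') (hP1 : ∀ s a, ∑ s', P s a s' = 1)
    (hγ0 : 0 ≤ γ) (hγ1 : γ < 1)
    (hne : ∀ s : S, ((univ : Finset (A × S)).filter
      (fun x => 0 < pol s x.1 ∧ 0 < P s x.1 x.2)).Nonempty)
    (Vw : S → ℝ)
    (hVw : ∀ s, Vw s = ((univ : Finset (A × S)).filter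
      (fun x => 0 < pol s x.1 ∧ 0 < P s x.1 x.2)).inf' (hne s)
      (fun x => R s x.1 x.2 + γ * Vw x.2))
    (Tm : (S → ℝ) → (S → ℝ))
    (hTm : ∀ V s, Tm V s =
      V s + ∑ a, ∑ s', pol s a * P s a s' * min (R s a s' + γ * V s' - V s) 0) :
    Tm Vw = Vw := by
  funext s
  rw [hTm]
  have hzero : ∀ a s', pol s a * P s a s' * min (R s a s' + γ * Vw s' - Vw s) 0 = 0 := by
    intro a s'
    by_cases hpa : 0 < pol s a
    · by_cases hps : 0 < P s a s'
      · have hmem : (a, s') ∈ ((univ : Finset (A × S)).filter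
            (fun x => 0 < pol s x.1 ∧ 0 < P s x.1 x.2)) := by
          simp [hpa, hps]
        have hle : Vw s ≤ R s a s' + γ * Vw s' := by
          rw [hVw s]
          exact inf'_le _ hmem
        have : min (R s a s' + γ * Vw s' - Vw s) 0 = 0 :=
          min_eq_right (by linarith)
        rw [this, mul_zero]
      · have : P s a s' = 0 := le_antisymm (not_lt.mp hps) (hP0 s a s')
        rw [this, mul_zero, zero_mul]
    · have : pol s a = 0 := le_antisymm (not_lt.mp hpa) (hpol0 s a)
      rw [this, zero_mul, zero_mul]
  simp only [hzero, Finset.sum_const_zero, add_zero]
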